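/- Let T be a tree satisfying Σ_{uv ∈ E(T)}(d_u + d_v) = 4|E(T)| and let T_s be its s-th subdivision (s ≥ 1). If (T_s)' is obtained from T_s by inserting one additional vertex into a single arbitrarily chosen edge of T_s, then (T_s)' also has assortativity coefficient zero, i.e. 4m' · Σ_{ij ∈ E'} d_i d_j = (Σ_{ij ∈ E'}(d_i + d_j))² where m' = |E'|. -/

import Mathlib

open Finset

attribute [local instance] Classical.propDecidable

namespace Neutral

/-- Number of edges of `G`. -/
noncomputable def m {V : Type*} [Fintype V] (G : SimpleGraph V) : ℕ :=
  G.edgeFinset.card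

/-- `∑_{uv ∈ E} d_u · d_v`, each edge counted once. -/
noncomputable def dd {V : Type*} [Fintype V] (G : SimpleGraph V) : ℕ :=
  ∑ e ∈ G.edgeFinset,
    Sym2.lift ⟨fun u v => G.degree u * G.degree v, fun _ _ => Nat.mul_comm _ _⟩ e

/-- `∑_{uv ∈ E} (d_u + d_v)`, each edge counted once. -/
noncomputable def ds {V : Type*} [Fintype V] (G : SimpleGraph V) : ℕ :=
  ∑ e ∈ G.edgeFinset,
    Sym2.lift ⟨fun u v => G.degree u + G.degree v, fun _ _ => Nat.add_comm _ _⟩ e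

/-- `∑_{uv ∈ E} (d_u² + d_v²)`, each edge counted once. -/
noncomputable def dsq {V : Type*} [Fintype V] (G : SimpleGraph V) : ℕ :=
  ∑ e ∈ G.edgeFinset,
    Sym2.lift ⟨fun u v => G.degree u ^ 2 + G.degree v ^ 2, fun _ _ => Nat.add_comm _ _⟩ e

/-- A graph is irregular if it is not regular of any degree. -/
def Irregular {V : Type*} [Fintype V] (G : SimpleGraph V) : Prop :=
  ¬ ∃ k, G.IsRegularOfDegree k

end Neutral

open Neutral

namespace Neutral

/-- A chosen pair of endpoints of an unordered edge. -/
noncomputable def ends {V : Type*} (e : Sym2 V) : V × V :=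
  Classical.choose (Quot.exists_rep e)

/-- One-directional adjacency used to build the `s`-th subdivision graph:
the new vertices `(e,0), …, (e,s-1)` inserted on the edge `e` form a path joining
the two endpoints of `e`. -/
def subS {V : Type*} (G : SimpleGraph V) (s : ℕ) :
    (V ⊕ (G.edgeSet × Fin s)) → (V ⊕ (G.edgeSet × Fin s)) → Prop
  | Sum.inl u, Sum.inr (e, i) =>
      (i.val = 0 ∧ u = (ends (e : Sym2 V)).1) ∨ (i.val = s - 1 ∧ u = (ends (e : Sym2 V)).2)
  | Sum.inr (e, i), Sum.inr (f, j) => e = f ∧ i.val + 1 = j.val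
  | _, _ => False

/-- The `s`-th subdivision graph `G_s`: every edge of `G` is subdivided by `s` new
vertices. -/
noncomputable def Subdiv {V : Type*} (G : SimpleGraph V) (s : ℕ) :
    SimpleGraph (V ⊕ (G.edgeSet × Fin s)) where
  Adj x y := x ≠ y ∧ (subS G s x y ∨ subS G s y x)
  symm := ⟨fun _ _ h => ⟨Ne.symm h.1, h.2.symm⟩⟩
  loopless := ⟨fun _ h => h.1 rfl⟩

end Neutral

namespace Neutral

/-- One-directional adjacency for the single-edge division graph: the chosen edge `e`
is removed and a new vertex is joined to its two endpoints; all other edges remain. -/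
def sdS {W : Type*} (H : SimpleGraph W) (e : Sym2 W) :
    (W ⊕ Unit) → (W ⊕ Unit) → Prop
  | Sum.inl u, Sum.inl v => H.Adj u v ∧ s(u, v) ≠ e
  | Sum.inl u, Sum.inr _ => u ∈ e
  | _, _ => False

/-- The single-edge division graph `G'`, obtained by inserting one new vertex into a
single chosen edge `e` of `H`. -/
def SingleDiv {W : Type*} (H : SimpleGraph W) (e : Sym2 W) :
    SimpleGraph (W ⊕ Unit) where
  Adj x y := x ≠ y ∧ (sdS H e x y ∨ sdS H e y x)
  symm := ⟨fun _ _ h => ⟨Ne.symm h.1, h.2.symm⟩⟩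
  loopless := ⟨fun _ h => h.1 rfl⟩

end Neutral

namespace Neutral

set_option linter.unusedSectionVars false

lemma ends_spec {V : Type*} (e : Sym2 V) : s((ends e).1, (ends e).2) = e :=
  Classical.choose_spec (Quot.exists_rep e)

section SD
variable {W : Type*} [Fintype W] {H : SimpleGraph W}


lemma sd_adj_inl_inl {e : Sym2 W} {u v : W} :
    (SingleDiv H e).Adj (Sum.inl u) (Sum.inl v) ↔ H.Adj u v ∧ s(u, v) ≠ e := by
  constructor
  · rintro ⟨hne, h | h⟩
    · exact h
    · exact ⟨h.1.symm, by rw [Sym2.eq_swap]; exact h.2⟩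
  · intro h
    exact ⟨fun hh => h.1.ne (Sum.inl.inj hh), Or.inl h⟩

lemma sd_adj_inl_inr {e : Sym2 W} {u : W} {t : Unit} :
    (SingleDiv H e).Adj (Sum.inl u) (Sum.inr t) ↔ u ∈ e := by
  constructor
  · rintro ⟨hne, h | h⟩
    · exact h
    · exact h.elim
  · intro h
    exact ⟨by simp, Or.inl h⟩

lemma sd_adj_inr_inr {e : Sym2 W} {t t' : Unit} :
    ¬ (SingleDiv H e).Adj (Sum.inr t) (Sum.inr t') := by
  rintro ⟨hne, h | h⟩ <;> exact h

lemma sd_deg_inl (e : Sym2 W) (heE : e ∈ H.edgeSet) (v : W) :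
    (SingleDiv H e).degree (Sum.inl v) = H.degree v := by
  classical
  rw [← SimpleGraph.card_neighborFinset_eq_degree,
      ← SimpleGraph.card_neighborFinset_eq_degree]
  symm
  apply Finset.card_bij (fun (u : W) _ =>
    if s(v, u) = e then (Sum.inr () : W ⊕ Unit) else Sum.inl u)
  · intro u hu
    rw [SimpleGraph.mem_neighborFinset] at hu ⊢
    split_ifs with hvu
    · rw [sd_adj_inl_inr]
      rw [← hvu]
      exact Sym2.mem_mk_left v u
    · exact sd_adj_inl_inl.mpr ⟨hu, hvu⟩
  · intro u1 h1 u2 h2 hEq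
    split_ifs at hEq with hv1 hv2 hv2 <;>
      first
        | (exact Sym2.congr_right.mp (hv1.trans hv2.symm))
        | exact Sum.inl.inj hEq
        | simp at hEq
  · intro x hx
    rw [SimpleGraph.mem_neighborFinset] at hx
    match x with
    | Sum.inl u =>
      have h := sd_adj_inl_inl.mp hx
      refine ⟨u, SimpleGraph.mem_neighborFinset _ _ _ |>.mpr h.1, ?_⟩
      rw [if_neg h.2]
    | Sum.inr () =>
      have hv : v ∈ e := sd_adj_inl_inr.mp hx
      set a := (ends e).1 with ha
      set b := (ends e).2 with hb
      have he : e = s(a, b) := (ends_spec e).symm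
      have hadj : H.Adj a b := by rw [← SimpleGraph.mem_edgeSet, ← he]; exact heE
      rw [he, Sym2.mem_iff] at hv
      rcases hv with rfl | rfl
      · refine ⟨b, SimpleGraph.mem_neighborFinset _ _ _ |>.mpr hadj, ?_⟩
        rw [if_pos he.symm]
      · refine ⟨a, SimpleGraph.mem_neighborFinset _ _ _ |>.mpr hadj.symm, ?_⟩
        rw [if_pos (by rw [Sym2.eq_swap]; exact he.symm)]

lemma sd_deg_inr (e : Sym2 W) (heE : e ∈ H.edgeSet) (t : Unit) :
    (SingleDiv H e).degree (Sum.inr t) = 2 := by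
  classical
  set a := (ends e).1 with ha
  set b := (ends e).2 with hb
  have he : e = s(a, b) := (ends_spec e).symm
  have hab : a ≠ b := by
    intro h
    have := H.not_isDiag_of_mem_edgeSet heE
    rw [he, h] at this
    simp at this
  rw [← SimpleGraph.card_neighborFinset_eq_degree]
  have : (SingleDiv H e).neighborFinset (Sum.inr t) = {Sum.inl a, Sum.inl b} := by
    ext x
    rw [SimpleGraph.mem_neighborFinset]
    match x with
    | Sum.inl u =>
      rw [SimpleGraph.adj_comm, sd_adj_inl_inr, he, Sym2.mem_iff]
      simp
    | Sum.inr t' =>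
      rcases t; rcases t'
      simp [sd_adj_inr_inr]
  rw [this, Finset.card_insert_of_notMem (by simp [hab]), Finset.card_singleton]

lemma sd_edgeFinset {e : Sym2 W} {a b : W} (hab : a ≠ b) (he : e = s(a, b))
    (heE : e ∈ H.edgeSet) :
    (SingleDiv H e).edgeFinset =
      insert s(Sum.inl a, (Sum.inr () : W ⊕ Unit))
        (insert s(Sum.inl b, (Sum.inr () : W ⊕ Unit))
          ((H.edgeFinset.erase e).image (Sym2.map Sum.inl))) := by
  classical
  ext g
  induction g using Sym2.ind with
  | _ x y =>
    rw [SimpleGraph.mem_edgeFinset, SimpleGraph.mem_edgeSet]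
    match x, y with
    | Sum.inl u, Sum.inl w =>
      rw [sd_adj_inl_inl]
      simp only [Finset.mem_insert, Finset.mem_image, Finset.mem_erase,
        SimpleGraph.mem_edgeFinset, SimpleGraph.mem_edgeSet]
      constructor
      · rintro ⟨hadj, hne⟩
        refine Or.inr (Or.inr ⟨s(u, w), ⟨hne, hadj⟩, ?_⟩)
        rw [Sym2.map_pair_eq]
      · rintro (h | h | ⟨g', ⟨hg1, hg2⟩, hg3⟩)
        · exfalso; rw [Sym2.eq_iff] at h; simp at h
        · exfalso; rw [Sym2.eq_iff] at h; simp at h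
        · induction g' using Sym2.ind with
          | _ p q =>
            rw [Sym2.map_pair_eq, Sym2.eq_iff] at hg3
            rcases hg3 with ⟨h1, h2⟩ | ⟨h1, h2⟩
            · obtain rfl : p = u := Sum.inl.inj h1
              obtain rfl : q = w := Sum.inl.inj h2
              exact ⟨hg2, hg1⟩
            · obtain rfl : p = w := Sum.inl.inj h1
              obtain rfl : q = u := Sum.inl.inj h2
              exact ⟨hg2.symm, by rw [Sym2.eq_swap]; exact hg1⟩
    | Sum.inl u, Sum.inr t =>
      rcases t
      rw [sd_adj_inl_inr, he, Sym2.mem_iff]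
      simp only [Finset.mem_insert, Finset.mem_image, Finset.mem_erase]
      constructor
      · rintro (rfl | rfl)
        · exact Or.inl rfl
        · exact Or.inr (Or.inl rfl)
      · rintro (h | h | ⟨g', hg', hg3⟩)
        · rw [Sym2.eq_iff] at h
          rcases h with ⟨h1, _⟩ | ⟨h1, h2⟩
          · exact Or.inl (Sum.inl.inj h1)
          · simp at h1
        · rw [Sym2.eq_iff] at h
          rcases h with ⟨h1, _⟩ | ⟨h1, h2⟩
          · exact Or.inr (Sum.inl.inj h1)
          · simp at h1
        · exfalso
          induction g' using Sym2.ind with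
          | _ p q =>
            rw [Sym2.map_pair_eq, Sym2.eq_iff] at hg3
            rcases hg3 with ⟨_, h2⟩ | ⟨h1, _⟩ <;> simp at *
    | Sum.inr t, Sum.inl u =>
      rcases t
      rw [show (s(Sum.inr (), Sum.inl u) : Sym2 (W ⊕ Unit)) = s(Sum.inl u, Sum.inr ())
            from Sym2.eq_swap,
          SimpleGraph.adj_comm, sd_adj_inl_inr, he, Sym2.mem_iff]
      simp only [Finset.mem_insert, Finset.mem_image, Finset.mem_erase]
      constructor
      · rintro (rfl | rfl)
        · exact Or.inl rfl
        · exact Or.inr (Or.inl rfl)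
      · rintro (h | h | ⟨g', hg', hg3⟩)
        · rw [Sym2.eq_iff] at h
          rcases h with ⟨h1, _⟩ | ⟨h1, h2⟩
          · exact Or.inl (Sum.inl.inj h1)
          · simp at h1
        · rw [Sym2.eq_iff] at h
          rcases h with ⟨h1, _⟩ | ⟨h1, h2⟩
          · exact Or.inr (Sum.inl.inj h1)
          · simp at h1
        · exfalso
          induction g' using Sym2.ind with
          | _ p q =>
            rw [Sym2.map_pair_eq, Sym2.eq_iff] at hg3
            rcases hg3 with ⟨_, h2⟩ | ⟨h1, _⟩ <;> simp at *
    | Sum.inr t, Sum.inr t' =>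
      rcases t; rcases t'
      constructor
      · intro h; exact absurd h sd_adj_inr_inr
      · rintro h
        exfalso
        simp only [Finset.mem_insert, Finset.mem_image, Finset.mem_erase] at h
        rcases h with h | h | ⟨g', hg', hg3⟩
        · rw [Sym2.eq_iff] at h; simp at h
        · rw [Sym2.eq_iff] at h; simp at h
        · induction g' using Sym2.ind with
          | _ p q =>
            rw [Sym2.map_pair_eq, Sym2.eq_iff] at hg3
            rcases hg3 with ⟨h1, _⟩ | ⟨h1, _⟩ <;> simp at h1

lemma sd_not_mem_image (u : W) (S : Finset (Sym2 W)) :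
    s(Sum.inl u, (Sum.inr () : W ⊕ Unit)) ∉ S.image (Sym2.map Sum.inl) := by
  classical
  rintro h
  rw [Finset.mem_image] at h
  obtain ⟨g', _, hg3⟩ := h
  induction g' using Sym2.ind with
  | _ p q =>
    rw [Sym2.map_pair_eq, Sym2.eq_iff] at hg3
    rcases hg3 with ⟨_, h2⟩ | ⟨h1, _⟩ <;> simp at *

lemma sd_m {e : Sym2 W} {a b : W} (hab : a ≠ b) (he : e = s(a, b))
    (heE : e ∈ H.edgeSet) : m (SingleDiv H e) = m H + 1 := by
  classical
  have heF : e ∈ H.edgeFinset := SimpleGraph.mem_edgeFinset.mpr heE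
  have hpos : 1 ≤ H.edgeFinset.card := Finset.card_pos.mpr ⟨e, heF⟩
  rw [m, m, sd_edgeFinset hab he heE,
    Finset.card_insert_of_notMem, Finset.card_insert_of_notMem
      (sd_not_mem_image b _),
    Finset.card_image_of_injective _ (Sym2.map.injective Sum.inl_injective),
    Finset.card_erase_of_mem heF]
  · omega
  · rw [Finset.mem_insert]
    push_neg
    refine ⟨?_, sd_not_mem_image a _⟩
    simp [Sym2.eq_iff, hab]

lemma sd_ds {e : Sym2 W} {a b : W} (hab : a ≠ b) (he : e = s(a, b))
    (heE : e ∈ H.edgeSet) : ds (SingleDiv H e) = ds H + 4 := by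
  classical
  have heF : e ∈ H.edgeFinset := SimpleGraph.mem_edgeFinset.mpr heE
  rw [ds, ds, sd_edgeFinset hab he heE,
    Finset.sum_insert (by
      rw [Finset.mem_insert]
      push_neg
      refine ⟨?_, sd_not_mem_image a _⟩
      simp [Sym2.eq_iff, hab]),
    Finset.sum_insert (sd_not_mem_image b _),
    Finset.sum_image (fun x _ y _ hxy =>
      Sym2.map.injective Sum.inl_injective hxy)]
  have hsum : ∀ g ∈ H.edgeFinset.erase e,
      Sym2.lift ⟨fun u v => (SingleDiv H e).degree u + (SingleDiv H e).degree v,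
        fun _ _ => Nat.add_comm _ _⟩ (Sym2.map Sum.inl g)
      = Sym2.lift ⟨fun u v => H.degree u + H.degree v,
        fun _ _ => Nat.add_comm _ _⟩ g := by
    intro g _
    induction g using Sym2.ind with
    | _ p q =>
      rw [Sym2.map_pair_eq]
      simp only [Sym2.lift_mk]
      rw [sd_deg_inl e heE, sd_deg_inl e heE]
  rw [Finset.sum_congr rfl hsum]
  have hds : (∑ g ∈ H.edgeFinset, Sym2.lift ⟨fun u v => H.degree u + H.degree v,
        fun _ _ => Nat.add_comm _ _⟩ g)
      = (H.degree a + H.degree b) + ∑ g ∈ H.edgeFinset.erase e,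
        Sym2.lift ⟨fun u v => H.degree u + H.degree v,
        fun _ _ => Nat.add_comm _ _⟩ g := by
    rw [← Finset.add_sum_erase _ _ heF, he]
    simp [Sym2.lift_mk]
  rw [hds]
  simp only [Sym2.lift_mk]
  rw [sd_deg_inl e heE, sd_deg_inl e heE, sd_deg_inr e heE]
  ring

lemma sd_dd {e : Sym2 W} {a b : W} (hab : a ≠ b) (he : e = s(a, b))
    (heE : e ∈ H.edgeSet) :
    dd (SingleDiv H e) + H.degree a * H.degree b
      = dd H + 2 * (H.degree a + H.degree b) := by
  classical
  have heF : e ∈ H.edgeFinset := SimpleGraph.mem_edgeFinset.mpr heE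
  rw [dd, dd, sd_edgeFinset hab he heE,
    Finset.sum_insert (by
      rw [Finset.mem_insert]
      push_neg
      refine ⟨?_, sd_not_mem_image a _⟩
      simp [Sym2.eq_iff, hab]),
    Finset.sum_insert (sd_not_mem_image b _),
    Finset.sum_image (fun x _ y _ hxy =>
      Sym2.map.injective Sum.inl_injective hxy)]
  have hsum : ∀ g ∈ H.edgeFinset.erase e,
      Sym2.lift ⟨fun u v => (SingleDiv H e).degree u * (SingleDiv H e).degree v,
        fun _ _ => Nat.mul_comm _ _⟩ (Sym2.map Sum.inl g)
      = Sym2.lift ⟨fun u v => H.degree u * H.degree v,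
        fun _ _ => Nat.mul_comm _ _⟩ g := by
    intro g _
    induction g using Sym2.ind with
    | _ p q =>
      rw [Sym2.map_pair_eq]
      simp only [Sym2.lift_mk]
      rw [sd_deg_inl e heE, sd_deg_inl e heE]
  rw [Finset.sum_congr rfl hsum]
  have hds : (∑ g ∈ H.edgeFinset, Sym2.lift ⟨fun u v => H.degree u * H.degree v,
        fun _ _ => Nat.mul_comm _ _⟩ g)
      = (H.degree a * H.degree b) + ∑ g ∈ H.edgeFinset.erase e,
        Sym2.lift ⟨fun u v => H.degree u * H.degree v,
        fun _ _ => Nat.mul_comm _ _⟩ g := by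
    rw [← Finset.add_sum_erase _ _ heF, he]
    simp [Sym2.lift_mk]
  rw [hds]
  simp only [Sym2.lift_mk]
  rw [sd_deg_inl e heE, sd_deg_inl e heE, sd_deg_inr e heE]
  ring

end SD

section SUB
variable {V : Type*} [Fintype V] {T : SimpleGraph V} {s : ℕ}


lemma ends_edge (e : T.edgeSet) :
    ((e : Sym2 V) = s((ends (e : Sym2 V)).1, (ends (e : Sym2 V)).2)) :=
  (ends_spec _).symm

lemma ends_adj (e : T.edgeSet) :
    T.Adj (ends (e : Sym2 V)).1 (ends (e : Sym2 V)).2 := by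
  rw [← SimpleGraph.mem_edgeSet, ← ends_edge e]
  exact e.2

lemma ends_ne (e : T.edgeSet) :
    (ends (e : Sym2 V)).1 ≠ (ends (e : Sym2 V)).2 :=
  (ends_adj e).ne

lemma subdiv_adj_inl_inr {u : V} {e : T.edgeSet} {i : Fin s} :
    (Subdiv T s).Adj (Sum.inl u) (Sum.inr (e, i)) ↔
      ((i.val = 0 ∧ u = (ends (e : Sym2 V)).1) ∨
        (i.val = s - 1 ∧ u = (ends (e : Sym2 V)).2)) := by
  constructor
  · rintro ⟨hne, h | h⟩
    · exact h
    · exact h.elim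
  · intro h
    exact ⟨by simp, Or.inl h⟩

lemma subdiv_adj_inl_inl {u v : V} :
    ¬ (Subdiv T s).Adj (Sum.inl u) (Sum.inl v) := by
  rintro ⟨hne, h | h⟩ <;> exact h

lemma subdiv_adj_inr_inr {e f : T.edgeSet} {i j : Fin s} :
    (Subdiv T s).Adj (Sum.inr (e, i)) (Sum.inr (f, j)) ↔
      e = f ∧ (i.val + 1 = j.val ∨ j.val + 1 = i.val) := by
  constructor
  · rintro ⟨hne, h | h⟩
    · exact ⟨h.1, Or.inl h.2⟩
    · exact ⟨h.1.symm, Or.inr h.2⟩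
  · rintro ⟨rfl, h | h⟩
    · exact ⟨by simp [Prod.ext_iff]; omega, Or.inl ⟨rfl, h⟩⟩
    · exact ⟨by simp [Prod.ext_iff]; omega, Or.inr ⟨rfl, h⟩⟩

lemma subdiv_deg_inr (hs : 1 ≤ s) (e : T.edgeSet) (i : Fin s) :
    (Subdiv T s).degree (Sum.inr (e, i)) = 2 := by
  classical
  have hlt := i.isLt
  rw [← SimpleGraph.card_neighborFinset_eq_degree]
  set L : V ⊕ (T.edgeSet × Fin s) :=
    if i.val = 0 then Sum.inl (ends (e : Sym2 V)).1
    else Sum.inr (e, ⟨i.val - 1, lt_of_le_of_lt (Nat.sub_le _ _) hlt⟩) with hL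
  set R : V ⊕ (T.edgeSet × Fin s) :=
    if hR1 : i.val = s - 1 then Sum.inl (ends (e : Sym2 V)).2
    else Sum.inr (e, ⟨i.val + 1, by omega⟩) with hR
  have hmem : (Subdiv T s).neighborFinset (Sum.inr (e, i)) = {L, R} := by
    ext x
    rw [SimpleGraph.mem_neighborFinset, Finset.mem_insert, Finset.mem_singleton]
    match x with
    | Sum.inl u =>
      rw [SimpleGraph.adj_comm, subdiv_adj_inl_inr, hL, hR]
      constructor
      · rintro (⟨h0, rfl⟩ | ⟨h1, rfl⟩)
        · left; rw [if_pos h0]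
        · right; rw [dif_pos h1]
      · rintro (h | h)
        · rcases eq_or_ne i.val 0 with h0 | h0
          · rw [if_pos h0] at h
            exact Or.inl ⟨h0, Sum.inl.inj h⟩
          · rw [if_neg h0] at h
            simp at h
        · rcases eq_or_ne i.val (s - 1) with h1 | h1
          · rw [dif_pos h1] at h
            exact Or.inr ⟨h1, Sum.inl.inj h⟩
          · rw [dif_neg h1] at h
            simp at h
    | Sum.inr (f, j) =>
      rw [SimpleGraph.adj_comm, subdiv_adj_inr_inr, hL, hR]
      constructor
      · rintro ⟨rfl, h | h⟩
        · left
          rw [if_neg (by omega)]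
          exact congrArg Sum.inr (Prod.ext rfl (Fin.ext (show j.val = i.val - 1 by omega)))
        · right
          rw [dif_neg (by omega)]
          exact congrArg Sum.inr (Prod.ext rfl (Fin.ext (show j.val = i.val + 1 by omega)))
      · rintro (h | h)
        · rcases eq_or_ne i.val 0 with h0 | h0
          · rw [if_pos h0] at h
            simp at h
          · rw [if_neg h0] at h
            obtain ⟨rfl, hj⟩ := Prod.mk.inj (Sum.inr.inj h)
            have hjv : j.val = i.val - 1 := by rw [hj]
            exact ⟨rfl, Or.inl (by omega)⟩
        · rcases eq_or_ne i.val (s - 1) with h1 | h1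
          · rw [dif_pos h1] at h
            simp at h
          · rw [dif_neg h1] at h
            obtain ⟨rfl, hj⟩ := Prod.mk.inj (Sum.inr.inj h)
            have hjv : j.val = i.val + 1 := by rw [hj]
            exact ⟨rfl, Or.inr (by omega)⟩
  rw [hmem]
  have hLR : L ≠ R := by
    rw [hL, hR]
    split_ifs with h0 h1 h1
    · intro h
      exact ends_ne e (Sum.inl.inj h)
    · simp
    · simp
    · intro h
      simp only [Sum.inr.injEq, Prod.mk.injEq, Fin.ext_iff] at h
      omega
  rw [Finset.card_insert_of_notMem (by simp [hLR]), Finset.card_singleton]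

lemma subdiv_deg_inl (hs : 1 ≤ s) (v : V) :
    (Subdiv T s).degree (Sum.inl v) = T.degree v := by
  classical
  rw [← SimpleGraph.card_neighborFinset_eq_degree,
      ← SimpleGraph.card_neighborFinset_eq_degree]
  symm
  apply Finset.card_bij (fun (u : V) (hu : u ∈ T.neighborFinset v) =>
    (Sum.inr (⟨⟨s(v, u), (T.mem_neighborFinset v u).mp hu⟩,
      if (ends s(v, u)).1 = v then ⟨0, hs⟩ else ⟨s - 1, by omega⟩⟩)
      : V ⊕ (T.edgeSet × Fin s)))
  · intro u hu
    rw [SimpleGraph.mem_neighborFinset] at hu ⊢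
    rw [subdiv_adj_inl_inr]
    by_cases hv : (ends s(v, u)).1 = v
    · rw [if_pos hv]
      exact Or.inl ⟨rfl, hv.symm⟩
    · rw [if_neg hv]
      refine Or.inr ⟨rfl, ?_⟩
      have hE : s((ends s(v,u)).1, (ends s(v,u)).2) = s(v, u) := ends_spec _
      rw [Sym2.eq_iff] at hE
      rcases hE with ⟨h1, h2⟩ | ⟨h1, h2⟩
      · exact absurd h1 hv
      · exact h2.symm
  · intro u1 h1 u2 h2 hEq
    simp only [Sum.inr.injEq, Prod.mk.injEq, Subtype.mk.injEq] at hEq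
    exact Sym2.congr_right.mp (congrArg Subtype.val hEq.1)
  · intro x hx
    rw [SimpleGraph.mem_neighborFinset] at hx
    match x with
    | Sum.inl u => exact absurd hx subdiv_adj_inl_inl
    | Sum.inr (E, idx) =>
      rw [subdiv_adj_inl_inr] at hx
      have hadjE : T.Adj (ends (E : Sym2 V)).1 (ends (E : Sym2 V)).2 := ends_adj E
      rcases hx with ⟨hidx, hv⟩ | ⟨hidx, hv⟩
      · -- v is the first endpoint, idx = 0
        refine ⟨(ends (E : Sym2 V)).2, (T.mem_neighborFinset _ _).mpr (hv ▸ hadjE), ?_⟩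
        have hE : s(v, (ends (E : Sym2 V)).2) = (E : Sym2 V) := by
          rw [hv]; exact ends_spec _
        have hcond : (ends s(v, (ends (E : Sym2 V)).2)).1 = v := by
          rw [hE, ← hv]
        rw [show (if (ends s(v, (ends (E : Sym2 V)).2)).1 = v
              then (⟨0, hs⟩ : Fin s) else ⟨s - 1, by omega⟩) = ⟨0, hs⟩
            from if_pos hcond]
        exact congrArg Sum.inr (Prod.ext (Subtype.ext hE) (Fin.ext (by simp [hidx])))
      · -- v is the second endpoint, idx = s - 1
        refine ⟨(ends (E : Sym2 V)).1, (T.mem_neighborFinset _ _).mpr (hv ▸ hadjE.symm), ?_⟩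
        have hE : s(v, (ends (E : Sym2 V)).1) = (E : Sym2 V) := by
          rw [hv, Sym2.eq_swap]; exact ends_spec _
        have hcond : ¬ (ends s(v, (ends (E : Sym2 V)).1)).1 = v := by
          rw [hE]
          exact fun hc => ends_ne E (hc.trans hv)
        rw [show (if (ends s(v, (ends (E : Sym2 V)).1)).1 = v
              then (⟨0, hs⟩ : Fin s) else ⟨s - 1, by omega⟩) = ⟨s - 1, by omega⟩
            from if_neg hcond]
        exact congrArg Sum.inr (Prod.ext (Subtype.ext hE) (Fin.ext (by simp [hidx])))

/-- The `i`-th edge on the subdivided path replacing edge `e`. -/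
noncomputable def FF (T : SimpleGraph V) (s : ℕ) (hs : 1 ≤ s) (e : T.edgeSet)
    (i : Fin (s + 1)) : Sym2 (V ⊕ (T.edgeSet × Fin s)) :=
  if h0 : i.val = 0 then s(Sum.inl (ends (e : Sym2 V)).1, Sum.inr (e, ⟨0, hs⟩))
  else if h1 : i.val = s then
    s(Sum.inl (ends (e : Sym2 V)).2, Sum.inr (e, ⟨s - 1, by omega⟩))
  else
    s(Sum.inr (e, ⟨i.val - 1, by have := i.isLt; omega⟩),
      Sum.inr (e, ⟨i.val, by have := i.isLt; omega⟩))

lemma FF_mem (hs : 1 ≤ s) (e : T.edgeSet) (i : Fin (s + 1)) :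
    FF T s hs e i ∈ (Subdiv T s).edgeFinset := by
  classical
  rw [SimpleGraph.mem_edgeFinset]
  unfold FF
  split_ifs with h0 h1
  · rw [SimpleGraph.mem_edgeSet, subdiv_adj_inl_inr]
    exact Or.inl ⟨rfl, rfl⟩
  · rw [SimpleGraph.mem_edgeSet, subdiv_adj_inl_inr]
    exact Or.inr ⟨rfl, rfl⟩
  · rw [SimpleGraph.mem_edgeSet, subdiv_adj_inr_inr]
    have := i.isLt
    exact ⟨rfl, Or.inl (show i.val - 1 + 1 = i.val by omega)⟩

lemma FF_inj (hs : 1 ≤ s) :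
    Function.Injective (fun p : T.edgeSet × Fin (s + 1) => FF T s hs p.1 p.2) := by
  classical
  rintro ⟨e, i⟩ ⟨f, j⟩ h
  simp only at h
  unfold FF at h
  have hilt := i.isLt
  have hjlt := j.isLt
  split_ifs at h with h1 h2 h3 h4 h5 h6 h7 h8 <;>
    rw [Sym2.eq_iff] at h <;>
    rcases h with ⟨ha, hb⟩ | ⟨ha, hb⟩ <;>
    first
      | exact absurd ha Sum.inl_ne_inr
      | exact absurd ha Sum.inr_ne_inl
      | exact absurd hb Sum.inl_ne_inr
      | exact absurd hb Sum.inr_ne_inl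
      | (obtain ⟨hef, hfin⟩ := Prod.mk.inj (Sum.inr.inj hb)
         rw [Fin.mk.injEq] at hfin
         exact Prod.ext hef (Fin.ext (show i.val = j.val by omega)))
      | (obtain ⟨hef, hfin⟩ := Prod.mk.inj (Sum.inr.inj hb)
         subst hef
         exact absurd (Sum.inl.inj ha) (ends_ne _))
      | (obtain ⟨hef, hfin⟩ := Prod.mk.inj (Sum.inr.inj hb)
         subst hef
         exact absurd (Sum.inl.inj ha) (Ne.symm (ends_ne _)))
      | (obtain ⟨hef1, hfin1⟩ := Prod.mk.inj (Sum.inr.inj ha)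
         obtain ⟨hef2, hfin2⟩ := Prod.mk.inj (Sum.inr.inj hb)
         rw [Fin.mk.injEq] at hfin1 hfin2
         exact absurd hfin1 (by omega))

lemma subdiv_edgeFinset (hs : 1 ≤ s) :
    (Subdiv T s).edgeFinset =
      Finset.image (fun p : T.edgeSet × Fin (s + 1) => FF T s hs p.1 p.2)
        Finset.univ := by
  classical
  ext g
  constructor
  · intro hg
    induction g using Sym2.ind with
    | _ x y =>
      rw [SimpleGraph.mem_edgeFinset, SimpleGraph.mem_edgeSet] at hg
      match x, y with
      | Sum.inl u, Sum.inl v => exact absurd hg subdiv_adj_inl_inl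
      | Sum.inl u, Sum.inr (e, i) =>
        rw [subdiv_adj_inl_inr] at hg
        rcases hg with ⟨h0, rfl⟩ | ⟨h1, rfl⟩
        · refine Finset.mem_image.mpr ⟨(e, ⟨0, Nat.succ_pos s⟩), Finset.mem_univ _, ?_⟩
          simp only
          unfold FF
          rw [dif_pos rfl, show i = (⟨0, hs⟩ : Fin s) from Fin.ext h0]
        · refine Finset.mem_image.mpr ⟨(e, ⟨s, Nat.lt_succ_self s⟩), Finset.mem_univ _, ?_⟩
          simp only
          unfold FF
          rw [dif_neg (show ¬(s = 0) by omega), dif_pos rfl,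
            show i = (⟨s - 1, by omega⟩ : Fin s) from Fin.ext h1]
      | Sum.inr (e, i), Sum.inl u =>
        rw [SimpleGraph.adj_comm, subdiv_adj_inl_inr] at hg
        rw [Sym2.eq_swap]
        rcases hg with ⟨h0, rfl⟩ | ⟨h1, rfl⟩
        · refine Finset.mem_image.mpr ⟨(e, ⟨0, Nat.succ_pos s⟩), Finset.mem_univ _, ?_⟩
          simp only
          unfold FF
          rw [dif_pos rfl, show i = (⟨0, hs⟩ : Fin s) from Fin.ext h0]
        · refine Finset.mem_image.mpr ⟨(e, ⟨s, Nat.lt_succ_self s⟩), Finset.mem_univ _, ?_⟩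
          simp only
          unfold FF
          rw [dif_neg (show ¬(s = 0) by omega), dif_pos rfl,
            show i = (⟨s - 1, by omega⟩ : Fin s) from Fin.ext h1]
      | Sum.inr (e, i), Sum.inr (f, j) =>
        rw [subdiv_adj_inr_inr] at hg
        have hilt := i.isLt
        have hjlt := j.isLt
        obtain ⟨rfl, h | h⟩ := hg
        · refine Finset.mem_image.mpr ⟨(e, ⟨j.val, by omega⟩), Finset.mem_univ _, ?_⟩
          simp only
          unfold FF
          simp only [Fin.val_mk]
          rw [dif_neg (show ¬(j.val = 0) by omega),
            dif_neg (show ¬(j.val = s) by omega),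
            show i = (⟨j.val - 1, by omega⟩ : Fin s) from
              Fin.ext (show i.val = j.val - 1 by omega)]
        · rw [Sym2.eq_swap]
          refine Finset.mem_image.mpr ⟨(e, ⟨i.val, Nat.lt_succ_of_lt hilt⟩), Finset.mem_univ _, ?_⟩
          simp only
          rw [show j = (⟨i.val - 1, lt_of_le_of_lt (Nat.sub_le _ _) hilt⟩ : Fin s) from
              Fin.ext (show j.val = i.val - 1 by omega)]
          unfold FF
          simp only [Fin.val_mk]
          rw [dif_neg (show ¬(i.val = 0) by omega),
            dif_neg (show ¬(i.val = s) by omega)]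
  · intro hg
    obtain ⟨p, _, rfl⟩ := Finset.mem_image.mp hg
    exact FF_mem hs p.1 p.2

lemma card_edgeSet_eq_m : Fintype.card T.edgeSet = m T := by
  rw [m, SimpleGraph.edgeFinset, Set.toFinset_card]

lemma subdiv_m (hs : 1 ≤ s) : m (Subdiv T s) = m T * (s + 1) := by
  classical
  rw [m, subdiv_edgeFinset hs,
    Finset.card_image_of_injective _ (FF_inj hs), Finset.card_univ,
    Fintype.card_prod, Fintype.card_fin, card_edgeSet_eq_m]

lemma fin_sum_ite (t x0 xs c : ℕ) :
    (∑ i : Fin (t + 1 + 1),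
      (if (i : ℕ) = 0 then x0 else if (i : ℕ) = t + 1 then xs else c))
      = x0 + xs + t * c := by
  rw [Fin.sum_univ_succ, Fin.sum_univ_castSucc]
  rw [if_pos (show ((0 : Fin (t + 1 + 1)) : ℕ) = 0 from rfl)]
  have hlast : (((Fin.last t).succ : Fin (t + 1 + 1)) : ℕ) = t + 1 := by
    simp [Fin.val_succ, Fin.val_last]
  rw [if_neg (by rw [hlast]; omega), if_pos (by rw [hlast])]
  have hmid : ∀ i : Fin t,
      (if ((i.castSucc.succ : Fin (t + 1 + 1)) : ℕ) = 0 then x0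
        else if ((i.castSucc.succ : Fin (t + 1 + 1)) : ℕ) = t + 1 then xs else c) = c := by
    intro i
    have hv : ((i.castSucc.succ : Fin (t + 1 + 1)) : ℕ) = i.val + 1 := by
      simp [Fin.val_succ, Fin.coe_castSucc]
    have hlt := i.isLt
    rw [if_neg (by omega), if_neg (by rw [hv]; omega)]
  rw [Finset.sum_congr rfl (fun i _ => hmid i), Finset.sum_const, Finset.card_univ,
    Fintype.card_fin, smul_eq_mul]
  ring

lemma sum_ends_ds :
    ∑ e : T.edgeSet, (T.degree (ends (e : Sym2 V)).1 + T.degree (ends (e : Sym2 V)).2)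
      = ds T := by
  classical
  rw [ds, SimpleGraph.edgeFinset, ← Finset.sum_set_coe]
  apply Finset.sum_congr rfl
  intro e _
  conv_rhs => rw [← ends_spec (e : Sym2 V)]
  rw [Sym2.lift_mk]

lemma FF_lift_ds (hs : 1 ≤ s) (e : T.edgeSet) (i : Fin (s + 1)) :
    Sym2.lift ⟨fun u v => (Subdiv T s).degree u + (Subdiv T s).degree v,
        fun _ _ => Nat.add_comm _ _⟩ (FF T s hs e i)
      = (if (i : ℕ) = 0 then T.degree (ends (e : Sym2 V)).1 + 2
          else if (i : ℕ) = s then T.degree (ends (e : Sym2 V)).2 + 2 else 4) := by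
  unfold FF
  split_ifs with h0 h1
  · simp only [Sym2.lift_mk]
    rw [subdiv_deg_inl hs, subdiv_deg_inr hs]
  · simp only [Sym2.lift_mk]
    rw [subdiv_deg_inl hs, subdiv_deg_inr hs]
  · simp only [Sym2.lift_mk]
    rw [subdiv_deg_inr hs, subdiv_deg_inr hs]

lemma FF_lift_dd (hs : 1 ≤ s) (e : T.edgeSet) (i : Fin (s + 1)) :
    Sym2.lift ⟨fun u v => (Subdiv T s).degree u * (Subdiv T s).degree v,
        fun _ _ => Nat.mul_comm _ _⟩ (FF T s hs e i)
      = (if (i : ℕ) = 0 then T.degree (ends (e : Sym2 V)).1 * 2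
          else if (i : ℕ) = s then T.degree (ends (e : Sym2 V)).2 * 2 else 4) := by
  unfold FF
  split_ifs with h0 h1
  · simp only [Sym2.lift_mk]
    rw [subdiv_deg_inl hs, subdiv_deg_inr hs]
  · simp only [Sym2.lift_mk]
    rw [subdiv_deg_inl hs, subdiv_deg_inr hs]
  · simp only [Sym2.lift_mk]
    rw [subdiv_deg_inr hs, subdiv_deg_inr hs]

lemma subdiv_ds (hs : 1 ≤ s) : ds (Subdiv T s) = ds T + 4 * s * m T := by
  classical
  obtain ⟨t, rfl⟩ : ∃ t, s = t + 1 := ⟨s - 1, by omega⟩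
  rw [ds, subdiv_edgeFinset hs,
    Finset.sum_image (fun x _ y _ h => FF_inj hs h),
    Finset.sum_congr rfl (fun p _ => FF_lift_ds hs p.1 p.2),
    Fintype.sum_prod_type]
  dsimp only
  rw [Finset.sum_congr rfl (fun x _ => by
    convert fin_sum_ite t (T.degree (ends (x : Sym2 V)).1 + 2)
      (T.degree (ends (x : Sym2 V)).2 + 2) 4)]
  have key : ∀ e : T.edgeSet,
      T.degree (ends (e : Sym2 V)).1 + 2 + (T.degree (ends (e : Sym2 V)).2 + 2) + t * 4
      = (T.degree (ends (e : Sym2 V)).1 + T.degree (ends (e : Sym2 V)).2) + (4 + t * 4) :=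
    fun e => by ring
  rw [Finset.sum_congr rfl (fun e _ => key e), Finset.sum_add_distrib,
    Finset.sum_const, smul_eq_mul, Finset.card_univ, sum_ends_ds, card_edgeSet_eq_m]
  ring

lemma subdiv_dd (hs : 1 ≤ s) : dd (Subdiv T s) = 2 * ds T + 4 * (s - 1) * m T := by
  classical
  obtain ⟨t, rfl⟩ : ∃ t, s = t + 1 := ⟨s - 1, by omega⟩
  rw [dd, subdiv_edgeFinset hs,
    Finset.sum_image (fun x _ y _ h => FF_inj hs h),
    Finset.sum_congr rfl (fun p _ => FF_lift_dd hs p.1 p.2),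
    Fintype.sum_prod_type]
  dsimp only
  rw [Finset.sum_congr rfl (fun x _ => by
    convert fin_sum_ite t (T.degree (ends (x : Sym2 V)).1 * 2)
      (T.degree (ends (x : Sym2 V)).2 * 2) 4)]
  have key : ∀ e : T.edgeSet,
      T.degree (ends (e : Sym2 V)).1 * 2 + T.degree (ends (e : Sym2 V)).2 * 2 + t * 4
      = 2 * (T.degree (ends (e : Sym2 V)).1 + T.degree (ends (e : Sym2 V)).2) + t * 4 :=
    fun e => by ring
  rw [Finset.sum_congr rfl (fun e _ => key e), Finset.sum_add_distrib,
    Finset.sum_const, smul_eq_mul, Finset.card_univ, ← Finset.mul_sum,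
    sum_ends_ds, card_edgeSet_eq_m]
  have ht : t + 1 - 1 = t := by omega
  rw [ht]
  ring

lemma subdiv_edge_decomp (hs : 1 ≤ s) {g : Sym2 (V ⊕ (T.edgeSet × Fin s))}
    (hg : g ∈ (Subdiv T s).edgeSet) :
    ∃ (x : V ⊕ (T.edgeSet × Fin s)) (p : T.edgeSet × Fin s),
      g = s(x, Sum.inr p) := by
  classical
  have hg' : g ∈ (Subdiv T s).edgeFinset := SimpleGraph.mem_edgeFinset.mpr hg
  rw [subdiv_edgeFinset hs, Finset.mem_image] at hg'
  obtain ⟨⟨e, i⟩, _, rfl⟩ := hg'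
  simp only
  unfold FF
  split_ifs with h0 h1
  · exact ⟨_, _, rfl⟩
  · exact ⟨_, _, rfl⟩
  · exact ⟨_, _, rfl⟩

end SUB

end Neutral

/-- if a tree `T` satisfies `∑(d_u+d_v) = 4|E|` and `T_s` is its `s`-th
subdivision (`s ≥ 1`), then the single-edge division `(T_s)'` of `T_s` at any edge also
has zero assortativity coefficient: `4m'·∑ d_i d_j = (∑(d_i+d_j))²`. -/
theorem stmt_5 {V : Type*} [Fintype V] (T : SimpleGraph V)
    (htree : T.IsTree) (h : ds T = 4 * m T) (s : ℕ) (hs : 1 ≤ s)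
    (f : Sym2 (V ⊕ (T.edgeSet × Fin s))) (hf : f ∈ (Subdiv T s).edgeSet) :
    4 * m (SingleDiv (Subdiv T s) f) * dd (SingleDiv (Subdiv T s) f) =
      (ds (SingleDiv (Subdiv T s) f)) ^ 2 := by

  classical
  have hdsH : ds (Subdiv T s) = 4 * m (Subdiv T s) := by
    rw [subdiv_ds hs, subdiv_m hs, h]
    ring
  have hddH : dd (Subdiv T s) = 4 * m (Subdiv T s) := by
    obtain ⟨t, rfl⟩ : ∃ t, s = t + 1 := ⟨s - 1, by omega⟩
    rw [subdiv_dd hs, subdiv_m hs, h]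
    have ht : t + 1 - 1 = t := by omega
    rw [ht]
    ring
  obtain ⟨x, p, rfl⟩ := subdiv_edge_decomp hs hf
  have hadj : (Subdiv T s).Adj x (Sum.inr p) := (SimpleGraph.mem_edgeSet _).mp hf
  have hxne : x ≠ Sum.inr p := hadj.ne
  have hdb : (Subdiv T s).degree (Sum.inr p) = 2 := subdiv_deg_inr hs p.1 p.2
  have hm' := sd_m hxne rfl hf
  have hds' := sd_ds hxne rfl hf
  have hdd' := sd_dd hxne rfl hf
  rw [hdb] at hdd'
  have hdd2 : dd (SingleDiv (Subdiv T s) s(x, Sum.inr p)) = dd (Subdiv T s) + 4 := by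
    omega
  rw [hm', hds', hdd2, hdsH, hddH]
  ring
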